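/- A d×d real matrix Λ with all diagonal entries equal to 1 is a tail-dependence matrix if and only if Λ = a·B for some constant a ≥ 0 and some d×d Bernoulli-compatible matrix B; equivalently, the set of d×d tail-dependence matrices equals { M ∈ B_d^* : all diagonal entries of M equal 1 } (Theorem 3.6). -/

import Mathlib

open MeasureTheory ProbabilityTheory Filter Set
open scoped ENNReal

noncomputable section

/-- A Bernoulli-compatible matrix: `B i j = E[X i * X j]` for some random vector `X`
taking values in `{0,1}^d` on some probability space. -/
def IsBernoulliCompatible {d : ℕ} (B : Matrix (Fin d) (Fin d) ℝ) : Prop :=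
  ∃ (Ω : Type) (_ : MeasurableSpace Ω) (μ : Measure Ω),
    IsProbabilityMeasure μ ∧
    ∃ X : Ω → Fin d → ℝ, Measurable X ∧
      (∀ ω i, X ω i = 0 ∨ X ω i = 1) ∧
      (∀ i j, B i j = ∫ ω, X ω i * X ω j ∂μ)

/-- The (lower) tail-dependence coefficient of `Yi` and `Yj` exists and equals `l`:
`P(Yi ≤ u, Yj ≤ u)/u → l` as `u ↓ 0`. -/
def HasTailDepCoeff {Ω : Type} [MeasurableSpace Ω] (μ : Measure Ω)
    (Yi Yj : Ω → ℝ) (l : ℝ) : Prop :=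
  Filter.Tendsto (fun u : ℝ => (μ {ω | Yi ω ≤ u ∧ Yj ω ≤ u}).toReal / u)
    (nhdsWithin 0 (Set.Ioi 0)) (nhds l)

/-- The uniform distribution on `[0,1]`. -/
def stdUniform : Measure ℝ := volume.restrict (Set.Icc (0:ℝ) 1)

/-- A tail-dependence matrix: the matrix of pairwise (lower) tail-dependence coefficients
of some random vector with standard uniform margins. -/
def IsTailDependenceMatrix {d : ℕ} (Λ : Matrix (Fin d) (Fin d) ℝ) : Prop :=
  ∃ (Ω : Type) (_ : MeasurableSpace Ω) (μ : Measure Ω),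
    IsProbabilityMeasure μ ∧
    ∃ Y : Ω → Fin d → ℝ, Measurable Y ∧
      (∀ i, μ.map (fun ω => Y ω i) = stdUniform) ∧
      (∀ i j, HasTailDepCoeff μ (fun ω => Y ω i) (fun ω => Y ω j) (Λ i j))

lemma stdUniform_Iic (y : ℝ) : stdUniform (Iic y) = ENNReal.ofReal (min y 1) := by
  rw [stdUniform, Measure.restrict_apply measurableSet_Iic]
  have h : Iic y ∩ Icc (0:ℝ) 1 = Icc 0 (min y 1) := by
    ext t
    simp only [mem_inter_iff, mem_Iic, mem_Icc, le_min_iff]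
    tauto
  rw [h, Real.volume_Icc, sub_zero]

instance : IsProbabilityMeasure stdUniform := by
  constructor
  rw [stdUniform, Measure.restrict_apply MeasurableSet.univ, Set.univ_inter, Real.volume_Icc]
  norm_num

lemma stdUniform_Iio_zero : stdUniform (Iio 0) = 0 := by
  rw [stdUniform, Measure.restrict_apply measurableSet_Iio]
  have : Iio (0:ℝ) ∩ Icc 0 1 = ∅ := by
    ext t; simp only [mem_inter_iff, mem_Iio, mem_Icc, mem_empty_iff_false, iff_false]
    intro h; linarith [h.1, h.2.1]
  rw [this, measure_empty]


section Forward

variable {d : ℕ} {Ω : Type} [MeasurableSpace Ω] (μ : Measure Ω) (Y : Ω → Fin d → ℝ)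

/-- The partition cell. -/
def cellA (w : ℝ) (x : Fin d → Bool) : Set Ω := {ω | ∀ i, (Y ω i ≤ w ↔ x i = true)}

variable {μ Y}

lemma cellA_measurable (hYmi : ∀ i, Measurable fun ω => Y ω i) (w : ℝ) (x : Fin d → Bool) :
    MeasurableSet (cellA Y w x) := by
  have h : cellA Y w x = ⋂ i, (if x i = true then {ω | Y ω i ≤ w} else {ω | Y ω i ≤ w}ᶜ) := by
    ext ω
    simp only [cellA, mem_setOf_eq, mem_iInter]
    refine forall_congr' fun i => ?_
    by_cases h : x i = true <;> simp [h]
  rw [h]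
  refine MeasurableSet.iInter fun i => ?_
  by_cases h : x i = true <;> simp only [h, if_true, if_false]
  · exact measurableSet_le (hYmi i) measurable_const
  · exact (measurableSet_le (hYmi i) measurable_const).compl

lemma cellA_disjoint (w : ℝ) {x y : Fin d → Bool} (hxy : x ≠ y) :
    Disjoint (cellA Y w x) (cellA Y w y) := by
  rw [Set.disjoint_left]
  intro ω hωx hωy
  apply hxy
  funext i
  have h := ((hωx i).symm.trans (hωy i))
  cases hx : x i <;> cases hy : y i <;> simp_all

lemma cellA_union_two (w : ℝ) (i j : Fin d) :
    {ω | Y ω i ≤ w ∧ Y ω j ≤ w} =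
      ⋃ x ∈ Finset.univ.filter (fun x : Fin d → Bool => x i && x j), cellA Y w x := by
  ext ω
  simp only [mem_setOf_eq, Set.mem_iUnion, Finset.mem_filter, Finset.mem_univ, true_and,
    Bool.and_eq_true]
  constructor
  · rintro ⟨h1, h2⟩
    refine ⟨fun k => decide (Y ω k ≤ w), ⟨by simpa using h1, by simpa using h2⟩, fun k => ?_⟩
    simp [decide_eq_true_eq]
  · rintro ⟨x, ⟨hxi, hxj⟩, hω⟩
    exact ⟨(hω i).mpr hxi, (hω j).mpr hxj⟩

lemma cellA_union_one (w : ℝ) (i : Fin d) :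
    {ω | Y ω i ≤ w} = ⋃ x ∈ Finset.univ.filter (fun x : Fin d → Bool => x i), cellA Y w x := by
  ext ω
  simp only [mem_setOf_eq, Set.mem_iUnion, Finset.mem_filter, Finset.mem_univ, true_and]
  constructor
  · intro h1
    refine ⟨fun k => decide (Y ω k ≤ w), by simpa using h1, fun k => ?_⟩
    simp [decide_eq_true_eq]
  · rintro ⟨x, hxi, hω⟩
    exact (hω i).mpr hxi

end Forward

lemma forward_aux {d : ℕ} (Λ : Matrix (Fin d) (Fin d) ℝ)
    {Ω : Type} [MeasurableSpace Ω] (μ : Measure Ω) [IsProbabilityMeasure μ]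
    (Y : Ω → Fin d → ℝ) (hYmi : ∀ i, Measurable fun ω => Y ω i)
    (hmarg : ∀ i, μ.map (fun ω => Y ω i) = stdUniform)
    (htail : ∀ i j, Filter.Tendsto
      (fun u : ℝ => (μ {ω | Y ω i ≤ u ∧ Y ω j ≤ u}).toReal / u)
      (nhdsWithin 0 (Set.Ioi 0)) (nhds (Λ i j))) :
    ∃ c : (Fin d → Bool) → ℝ, (∀ x, 0 ≤ c x) ∧
      ∀ i j, Λ i j = ∑ x : Fin d → Bool, c x *
        ((if x i = true then (1:ℝ) else 0) * (if x j = true then (1:ℝ) else 0)) := by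
  -- a few basics
  have hC : ∀ (w : ℝ) (i : Fin d), 0 < w → w ≤ 1 → μ {ω | Y ω i ≤ w} = ENNReal.ofReal w := by
    intro w i hw0 hw1
    have h1 : μ {ω | Y ω i ≤ w} = stdUniform (Iic w) := by
      rw [← hmarg i, Measure.map_apply (hYmi i) measurableSet_Iic]
      rfl
    rw [h1, stdUniform_Iic, min_eq_left hw1]
  -- the normalized cell masses
  set v : ℝ → (Fin d → Bool) → ℝ := fun w x =>
    if x = (fun _ => false) then 0 else (μ (cellA Y w x)).toReal / w with hv
  have hex : ∀ x : Fin d → Bool, x ≠ (fun _ => false) → ∃ i, x i = true := by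
    intro x hx
    by_contra h
    push_neg at h
    apply hx
    funext i
    simpa using h i
  have hv0 : ∀ w x, 0 < w → 0 ≤ v w x := by
    intro w x hw
    rw [hv]
    dsimp only
    split_ifs
    · exact le_refl 0
    · positivity
  have hv1 : ∀ w x, 0 < w → w ≤ 1 → v w x ≤ 1 := by
    intro w x hw0 hw1
    rw [hv]
    dsimp only
    split_ifs with hx
    · exact zero_le_one
    · obtain ⟨i, hxi⟩ := hex x hx
      have hsub : cellA Y w x ⊆ {ω | Y ω i ≤ w} := fun ω hω => (hω i).mpr hxi
      have hle : (μ (cellA Y w x)).toReal ≤ w := by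
        have h2 : μ (cellA Y w x) ≤ ENNReal.ofReal w := by
          rw [← hC w i hw0 hw1]
          exact measure_mono hsub
        calc (μ (cellA Y w x)).toReal ≤ (ENNReal.ofReal w).toReal :=
              ENNReal.toReal_mono ENNReal.ofReal_ne_top h2
          _ = w := ENNReal.toReal_ofReal hw0.le
      rw [div_le_one hw0]
      exact hle
  have hsum2 : ∀ (w : ℝ), 0 < w → ∀ i j : Fin d,
      ∑ x : Fin d → Bool, v w x *
        ((if x i = true then (1:ℝ) else 0) * (if x j = true then (1:ℝ) else 0)) =
      (μ {ω | Y ω i ≤ w ∧ Y ω j ≤ w}).toReal / w := by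
    intro w hw0 i j
    have hstep : ∑ x : Fin d → Bool, v w x *
        ((if x i = true then (1:ℝ) else 0) * (if x j = true then (1:ℝ) else 0)) =
        ∑ x ∈ Finset.univ.filter (fun x : Fin d → Bool => x i && x j),
          (μ (cellA Y w x)).toReal / w := by
      rw [Finset.sum_filter]
      refine Finset.sum_congr rfl fun x _ => ?_
      by_cases hxi : x i = true <;> by_cases hxj : x j = true
      · have hne : x ≠ (fun _ => false) := by
          intro hcc
          rw [hcc] at hxi
          simp at hxi
        simp only [hxi, hxj, if_true, Bool.and_self, mul_one]
        rw [hv]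
        dsimp only
        rw [if_neg hne]
      · simp [hxi, hxj]
      · simp [hxi, hxj]
      · simp [hxi, hxj]
    rw [hstep, cellA_union_two w i j,
      measure_biUnion_finset (fun x _ y _ hxy => cellA_disjoint w hxy)
        (fun x _ => cellA_measurable hYmi w x),
      ENNReal.toReal_sum (fun x _ => measure_ne_top μ _), Finset.sum_div]
  -- the subsequence extraction
  set u : ℕ → ℝ := fun n => ((n : ℝ) + 2)⁻¹ with hu
  have hu0 : ∀ n, 0 < u n := fun n => by rw [hu]; dsimp only; positivity
  have hu1 : ∀ n, u n ≤ 1 := by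
    intro n
    rw [hu]
    dsimp only
    rw [inv_eq_one_div]
    apply div_le_one_of_le₀ <;> [skip; positivity]
    have : (0:ℝ) ≤ (n:ℝ) := Nat.cast_nonneg n
    linarith
  have huseq : Tendsto u atTop (nhdsWithin (0:ℝ) (Ioi 0)) :=
    tendsto_inv_atTop_nhdsGT_zero.comp (tendsto_atTop_add_const_right atTop 2 tendsto_natCast_atTop_atTop)
  have hK : IsCompact (Set.pi univ fun _ : Fin d → Bool => Icc (0:ℝ) 1) :=
    isCompact_univ_pi fun _ => isCompact_Icc
  have hmem : ∀ n, (v (u n)) ∈ Set.pi univ fun _ : Fin d → Bool => Icc (0:ℝ) 1 := by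
    intro n
    rw [Set.mem_univ_pi]
    intro x
    exact ⟨hv0 _ _ (hu0 n), hv1 _ x (hu0 n) (hu1 n)⟩
  obtain ⟨c, hcK, φ, hφ, hconv⟩ := hK.tendsto_subseq hmem
  rw [Set.mem_univ_pi] at hcK
  refine ⟨c, fun x => (hcK x).1, ?_⟩
  intro i j
  have hcoord : ∀ x, Tendsto (fun n => v (u (φ n)) x) atTop (nhds (c x)) := fun x =>
    ((continuous_apply x).tendsto c).comp hconv
  have lim1 : Tendsto (fun n => ∑ x : Fin d → Bool, v (u (φ n)) x *
      ((if x i = true then (1:ℝ) else 0) * (if x j = true then (1:ℝ) else 0))) atTop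
      (nhds (∑ x : Fin d → Bool, c x *
        ((if x i = true then (1:ℝ) else 0) * (if x j = true then (1:ℝ) else 0)))) :=
    tendsto_finset_sum _ fun x _ => (hcoord x).mul_const _
  have huφ : Tendsto (fun n => u (φ n)) atTop (nhdsWithin (0:ℝ) (Ioi 0)) :=
    huseq.comp hφ.tendsto_atTop
  have lim2 : Tendsto (fun n => ∑ x : Fin d → Bool, v (u (φ n)) x *
      ((if x i = true then (1:ℝ) else 0) * (if x j = true then (1:ℝ) else 0))) atTop
      (nhds (Λ i j)) := by
    refine ((htail i j).comp huφ).congr fun n => ?_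
    exact (hsum2 (u (φ n)) (hu0 _) i j).symm
  exact tendsto_nhds_unique lim2 lim1

lemma isBernoulliCompatible_of_weights {d : ℕ} (B : Matrix (Fin d) (Fin d) ℝ)
    (p : (Fin d → Bool) → ℝ) (hp0 : ∀ x, 0 ≤ p x) (hp1 : ∑ x, p x = 1)
    (hB : ∀ i j, B i j = ∑ x, p x * ((if x i then (1:ℝ) else 0) * (if x j then (1:ℝ) else 0))) :
    IsBernoulliCompatible B := by
  letI m : MeasurableSpace (Fin d → Bool) := ⊤
  haveI msc : MeasurableSingletonClass (Fin d → Bool) := ⟨fun _ => trivial⟩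
  set μ : Measure (Fin d → Bool) := ∑ x : Fin d → Bool, (ENNReal.ofReal (p x)) • Measure.dirac x with hμ
  have hμapp : ∀ s : Set (Fin d → Bool), μ s = ∑ x : Fin d → Bool, ENNReal.ofReal (p x) * s.indicator 1 x := by
    intro s
    rw [hμ, Measure.finset_sum_apply]
    congr 1; ext x
    rw [Measure.smul_apply, Measure.dirac_apply' _ MeasurableSpace.measurableSet_top, smul_eq_mul]
  have hμsingle : ∀ x : Fin d → Bool, μ {x} = ENNReal.ofReal (p x) := by
    intro x
    rw [hμapp]
    rw [Finset.sum_eq_single x]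
    · simp
    · intro b _ hb
      simp [Set.indicator_of_notMem, hb]
    · simp
  haveI hprob : IsProbabilityMeasure μ := by
    constructor
    rw [hμapp]
    simp only [Set.indicator_univ, Pi.one_apply, mul_one]
    rw [← ENNReal.ofReal_sum_of_nonneg (fun x _ => hp0 x), hp1, ENNReal.ofReal_one]
  refine ⟨Fin d → Bool, m, μ, hprob, fun x i => if x i then 1 else 0, ?_, ?_, ?_⟩
  · exact measurable_from_top
  · intro ω i
    by_cases h : ω i <;> simp [h]
  · intro i j
    rw [hB i j, integral_fintype (Integrable.of_finite)]
    congr 1; ext x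
    rw [measureReal_def, hμsingle, ENNReal.toReal_ofReal (hp0 x), smul_eq_mul]

lemma isTailDep_of_BdStar {d : ℕ} (Λ : Matrix (Fin d) (Fin d) ℝ) (hdiag : ∀ i, Λ i i = 1)
    (a : ℝ) (B : Matrix (Fin d) (Fin d) ℝ) (ha : 0 ≤ a) (hB : IsBernoulliCompatible B)
    (hΛ : Λ = a • B) : IsTailDependenceMatrix Λ := by
  rcases Nat.eq_zero_or_pos d with hd | hd
  · subst hd
    exact ⟨Unit, ⊤, Measure.dirac (), by infer_instance,
      fun _ i => i.elim0, measurable_from_top, fun i => i.elim0, fun i => i.elim0⟩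
  obtain ⟨Ω, m, μ, hprob, X, hXm, hX01, hXB⟩ := hB
  have hXmi : ∀ i, Measurable fun ω => X ω i := fun i => (measurable_pi_apply i).comp hXm
  set T : Fin d → Set Ω := fun i => {ω | X ω i = 1} with hT
  have hTm : ∀ i, MeasurableSet (T i) := fun i => (hXmi i) (measurableSet_singleton 1)
  have key : ∀ i j, B i j = (μ (T i ∩ T j)).toReal := by
    intro i j
    rw [hXB i j]
    have heq : (fun ω => X ω i * X ω j) = (T i ∩ T j).indicator 1 := by
      funext ω
      rcases hX01 ω i with h | h <;> rcases hX01 ω j with h' | h' <;>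
        simp [Set.indicator_apply, hT, mem_inter_iff, h, h', mem_setOf_eq]
    rw [heq, integral_indicator_one ((hTm i).inter (hTm j))]
    rfl
  have hBnn : ∀ i j, 0 ≤ B i j := fun i j => (key i j) ▸ ENNReal.toReal_nonneg
  have hBii : ∀ i, B i i = (μ (T i)).toReal := fun i => by rw [key i i, inter_self]
  have hΛab : ∀ i j, Λ i j = a * B i j := fun i j => by rw [hΛ]; rfl
  have i0 : Fin d := ⟨0, hd⟩
  have hBle1 : ∀ i, B i i ≤ 1 := by
    intro i
    rw [hBii]
    have h1 : μ (T i) ≤ 1 := prob_le_one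
    calc (μ (T i)).toReal ≤ (1 : ℝ≥0∞).toReal := ENNReal.toReal_mono ENNReal.one_ne_top h1
      _ = 1 := by simp
  have hBi0 : a * B i0 i0 = 1 := by rw [← hΛab, hdiag]
  have ha1 : 1 ≤ a := by nlinarith [hBnn i0 i0, hBle1 i0]
  have ha0 : 0 < a := lt_of_lt_of_le one_pos ha1
  have hBval : ∀ i, B i i = 1 / a := by
    intro i
    have h := hΛab i i
    rw [hdiag] at h
    field_simp
    linarith
  have hμT : ∀ i, μ (T i) = ENNReal.ofReal (1 / a) := by
    intro i
    rw [← ENNReal.ofReal_toReal (measure_ne_top μ (T i)), ← hBii, hBval]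
  have hμTij : ∀ i j, μ (T i ∩ T j) = ENNReal.ofReal (B i j) := fun i j => by
    rw [← ENNReal.ofReal_toReal (measure_ne_top μ _), ← key]
  -- the product space
  set ν : Measure (ℝ × ℝ) := stdUniform.prod stdUniform with hν
  set μ' : Measure (Ω × ℝ × ℝ) := μ.prod ν with hμ'
  haveI : IsProbabilityMeasure ν := by rw [hν]; infer_instance
  haveI : IsProbabilityMeasure μ' := by rw [hμ']; infer_instance
  set Y : Ω × ℝ × ℝ → Fin d → ℝ :=
    fun z i => if X z.1 i = 1 then z.2.1 / a else 1/a + (1 - 1/a) * z.2.2 with hY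
  have hYm : Measurable Y := by
    apply measurable_pi_lambda
    intro i
    apply Measurable.ite
    · exact ((hXmi i).comp measurable_fst) (measurableSet_singleton 1)
    · exact (measurable_fst.comp measurable_snd).div_const a
    · exact measurable_const.add ((measurable_snd.comp measurable_snd).const_mul _)
  have hYmi : ∀ i, Measurable fun z => Y z i := fun i => (measurable_pi_apply i).comp hYm
  refine ⟨Ω × ℝ × ℝ, inferInstance, μ', inferInstance, Y, hYm, ?_, ?_⟩
  · -- marginals
    intro i
    refine MeasureTheory.Measure.ext_of_Iic _ _ (fun y => ?_)
    rw [Measure.map_apply (hYmi i) measurableSet_Iic]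
    have hWm : MeasurableSet {w : ℝ | 1/a + (1 - 1/a) * w ≤ y} :=
      measurableSet_le (measurable_const.add (measurable_id.const_mul _)) measurable_const
    have hset : (fun z => Y z i) ⁻¹' Iic y =
        (T i ×ˢ (Iic (y * a) ×ˢ (univ : Set ℝ))) ∪
          ((T i)ᶜ ×ˢ ((univ : Set ℝ) ×ˢ {w : ℝ | 1/a + (1 - 1/a) * w ≤ y})) := by
      ext z
      simp only [mem_preimage, mem_Iic, mem_union, Set.mem_prod, mem_setOf_eq, mem_compl_iff,
        mem_univ, and_true, true_and, hY, hT]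
      by_cases h : X z.1 i = 1
      · simp only [h, if_true]
        rw [div_le_iff₀ ha0]
        tauto
      · simp only [h, if_false]
        tauto
    rw [hset, measure_union ?_ ((hTm i).compl.prod (MeasurableSet.univ.prod hWm))]
    swap
    · rw [Set.disjoint_left]
      rintro z ⟨h1, -⟩ ⟨h2, -⟩
      exact h2 h1
    rw [hμ', Measure.prod_prod, Measure.prod_prod, hν, Measure.prod_prod, Measure.prod_prod]
    rw [hμT i, prob_compl_eq_one_sub (hTm i), hμT i, stdUniform_Iic, measure_univ,
      stdUniform_Iic y, mul_one, one_mul]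
    rcases eq_or_lt_of_le ha1 with haeq | hagt
    · -- a = 1
      rw [← haeq]
      norm_num
    · -- 1 < a
      have hb0 : (0:ℝ) < 1 / a := by positivity
      have hb1 : 1 / a < 1 := by rw [div_lt_one ha0]; exact hagt
      have hcpos : (0:ℝ) < 1 - 1 / a := by linarith
      have hWeq : {w : ℝ | 1/a + (1 - 1/a) * w ≤ y} = Iic ((y - 1/a) / (1 - 1/a)) := by
        ext w
        simp only [mem_setOf_eq, mem_Iic]
        rw [le_div_iff₀ hcpos]
        constructor <;> intro h <;> nlinarith
      rw [hWeq, stdUniform_Iic]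
      have hsub : (1 : ℝ≥0∞) - ENNReal.ofReal (1/a) = ENNReal.ofReal (1 - 1/a) := by
        rw [ENNReal.ofReal_sub _ (le_of_lt hb0), ENNReal.ofReal_one]
      rw [hsub, ← ENNReal.ofReal_mul (le_of_lt hb0), ← ENNReal.ofReal_mul (le_of_lt hcpos)]
      rcases le_or_gt y (1/a) with hy1 | hy2
      · have h1 : min (y * a) 1 = y * a := by
          rw [min_eq_left]
          calc y * a ≤ (1/a) * a := by nlinarith
            _ = 1 := by field_simp
        have h2 : min ((y - 1/a) / (1 - 1/a)) 1 = (y - 1/a) / (1 - 1/a) := by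
          rw [min_eq_left]
          rw [div_le_one hcpos]; linarith
        have h3 : min y 1 = y := min_eq_left (by linarith)
        rw [h1, h2, h3]
        have e1 : 1/a * (y * a) = y := by field_simp
        have e2 : (1 - 1/a) * ((y - 1/a) / (1 - 1/a)) = y - 1/a := by
          rw [mul_comm, div_mul_cancel₀ _ (ne_of_gt hcpos)]
        rw [e1, e2, ENNReal.ofReal_eq_zero.mpr (by linarith : y - 1/a ≤ 0) , add_zero]
      · have h1 : min (y * a) 1 = 1 := by
          rw [min_eq_right]
          calc (1:ℝ) = (1/a) * a := by field_simp
            _ ≤ y * a := by nlinarith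
        rw [h1, mul_one]
        rcases le_or_gt y 1 with hy3 | hy3
        · have h2 : min ((y - 1/a) / (1 - 1/a)) 1 = (y - 1/a) / (1 - 1/a) := by
            refine min_eq_left ?_
            rw [div_le_one hcpos]; linarith
          have h3 : min y 1 = y := min_eq_left hy3
          rw [h2, h3]
          have e2 : (1 - 1/a) * ((y - 1/a) / (1 - 1/a)) = y - 1/a := by
            rw [mul_comm, div_mul_cancel₀ _ (ne_of_gt hcpos)]
          rw [e2, ← ENNReal.ofReal_add (le_of_lt hb0) (by linarith)]
          norm_num
        · have h2 : min ((y - 1/a) / (1 - 1/a)) 1 = 1 := by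
            refine min_eq_right ?_
            rw [le_div_iff₀ hcpos]; nlinarith
          have h3 : min y 1 = 1 := min_eq_right (le_of_lt hy3)
          rw [h2, h3, mul_one, ← ENNReal.ofReal_add (le_of_lt hb0) (le_of_lt hcpos)]
          norm_num
  · -- tail dependence coefficients
    intro i j
    have hc0 : (0:ℝ) ≤ 1 - 1/a := by
      have : 1/a ≤ 1 := by rw [div_le_one ha0]; exact ha1
      linarith
    have main : ∀ u : ℝ, 0 < u → u < 1/a →
        μ' {z : Ω × ℝ × ℝ | Y z i ≤ u ∧ Y z j ≤ u} =
          ENNReal.ofReal (B i j) * ENNReal.ofReal (u * a) := by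
      intro u hu0 hua
      have huapos : 0 < u * a := by positivity
      have hua1 : u * a ≤ 1 := by
        calc u * a ≤ (1/a) * a := by nlinarith
          _ = 1 := by field_simp
      set S := T i ∩ T j with hS
      have hSm : MeasurableSet S := (hTm i).inter (hTm j)
      set E := {z : Ω × ℝ × ℝ | Y z i ≤ u ∧ Y z j ≤ u} with hE
      set A := S ×ˢ (univ : Set (ℝ × ℝ)) with hA
      have hAm : MeasurableSet A := hSm.prod MeasurableSet.univ
      have hsplit : μ' (E ∩ A) + μ' (E \ A) = μ' E := measure_inter_add_diff E hAm
      have hEA : E ∩ A = S ×ˢ (Iic (u*a) ×ˢ (univ : Set ℝ)) := by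
        ext z
        constructor
        · rintro ⟨⟨hYi, hYj⟩, hzS, -⟩
          refine ⟨hzS, ?_, trivial⟩
          have hXi : X z.1 i = 1 := hzS.1
          simp only [hY] at hYi
          rw [if_pos hXi] at hYi
          exact (div_le_iff₀ ha0).1 hYi
        · rintro ⟨hzS, hle, -⟩
          have hXi : X z.1 i = 1 := hzS.1
          have hXj : X z.1 j = 1 := hzS.2
          refine ⟨⟨?_, ?_⟩, hzS, trivial⟩
          · show (if X z.1 i = 1 then z.2.1 / a else 1/a + (1 - 1/a) * z.2.2) ≤ u
            rw [if_pos hXi, div_le_iff₀ ha0]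
            exact hle
          · show (if X z.1 j = 1 then z.2.1 / a else 1/a + (1 - 1/a) * z.2.2) ≤ u
            rw [if_pos hXj, div_le_iff₀ ha0]
            exact hle
      have hdiff : μ' (E \ A) = 0 := by
        refine le_antisymm ?_ zero_le
        have hsub : E \ A ⊆ (univ : Set Ω) ×ˢ ((univ : Set ℝ) ×ˢ Iio (0:ℝ)) := by
          rintro z ⟨⟨hYi, hYj⟩, hzA⟩
          refine ⟨trivial, trivial, ?_⟩
          have hz1 : z.1 ∉ S := fun h => hzA ⟨h, trivial⟩
          have hcase : ¬ (X z.1 i = 1) ∨ ¬ (X z.1 j = 1) := by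
            by_contra hcon
            push_neg at hcon
            exact hz1 ⟨hcon.1, hcon.2⟩
          have hw : 1/a + (1 - 1/a) * z.2.2 ≤ u := by
            rcases hcase with h | h
            · simp only [hY] at hYi
              rwa [if_neg h] at hYi
            · simp only [hY] at hYj
              rwa [if_neg h] at hYj
          show z.2.2 < 0
          by_contra hnot
          push_neg at hnot
          nlinarith
        calc μ' (E \ A) ≤ μ' ((univ : Set Ω) ×ˢ ((univ : Set ℝ) ×ˢ Iio (0:ℝ))) :=
              measure_mono hsub
          _ = 0 := by
              rw [hμ', Measure.prod_prod, hν, Measure.prod_prod, stdUniform_Iio_zero,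
                mul_zero, mul_zero]
      rw [← hsplit, hdiff, add_zero, hEA, hμ', Measure.prod_prod, hν, Measure.prod_prod,
        measure_univ, mul_one, hS, hμTij, stdUniform_Iic, min_eq_left hua1]
    have hmem : Ioo (0:ℝ) (1/a) ∈ nhdsWithin (0:ℝ) (Ioi 0) :=
      Ioo_mem_nhdsGT (one_div_pos.mpr ha0)
    refine Filter.Tendsto.congr' ?_ tendsto_const_nhds
    filter_upwards [hmem] with u hu
    show Λ i j = (μ' {z : Ω × ℝ × ℝ | Y z i ≤ u ∧ Y z j ≤ u}).toReal / u
    rw [main u hu.1 hu.2, ENNReal.toReal_mul, ENNReal.toReal_ofReal (hBnn i j),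
      ENNReal.toReal_ofReal (le_of_lt (mul_pos hu.1 ha0)), hΛab]
    have hu0 : u ≠ 0 := ne_of_gt hu.1
    field_simp

/-- Theorem 3.6: a square matrix with unit diagonal is a tail-dependence matrix if and only if
it is a nonnegative constant multiple of a Bernoulli-compatible matrix. -/
theorem tail_dependence_iff_BdStar {d : ℕ} (Λ : Matrix (Fin d) (Fin d) ℝ)
    (hdiag : ∀ i, Λ i i = 1) :
    IsTailDependenceMatrix Λ ↔
      ∃ (a : ℝ) (B : Matrix (Fin d) (Fin d) ℝ),
        0 ≤ a ∧ IsBernoulliCompatible B ∧ Λ = a • B := by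
  constructor
  · intro h
    obtain ⟨Ω, m, μ, hprob, Y, hYm, hmarg, htail⟩ := h
    rcases Nat.eq_zero_or_pos d with hd | hd
    · subst hd
      refine ⟨0, 0, le_refl 0, ?_, ?_⟩
      · exact ⟨Unit, ⊤, Measure.dirac (), by infer_instance, fun _ i => i.elim0,
          measurable_from_top, fun ω i => i.elim0, fun i => i.elim0⟩
      · ext i j
        exact i.elim0
    · have hYmi : ∀ i, Measurable fun ω => Y ω i := fun i => (measurable_pi_apply i).comp hYm
      obtain ⟨c, hc0, hΛc⟩ := forward_aux Λ μ Y hYmi hmarg (fun i j => htail i j)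
      set a : ℝ := ∑ x : Fin d → Bool, c x with ha
      have ha0 : 0 ≤ a := Finset.sum_nonneg fun x _ => hc0 x
      rcases eq_or_lt_of_le ha0 with haz | hap
      · exfalso
        have hzero : ∀ x ∈ Finset.univ, c x = 0 :=
          (Finset.sum_eq_zero_iff_of_nonneg (fun x _ => hc0 x)).1 haz.symm
        have hone := hdiag ⟨0, hd⟩
        rw [hΛc] at hone
        rw [Finset.sum_eq_zero (fun x hx => by rw [hzero x hx, zero_mul])] at hone
        exact one_ne_zero hone.symm
      · refine ⟨a, a⁻¹ • Λ, ha0, ?_, (smul_inv_smul₀ (ne_of_gt hap) Λ).symm⟩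
        apply isBernoulliCompatible_of_weights _ (fun x => c x / a)
        · intro x
          exact div_nonneg (hc0 x) ha0
        · rw [← Finset.sum_div, ← ha, div_self (ne_of_gt hap)]
        · intro i j
          have hsm : (a⁻¹ • Λ) i j = a⁻¹ * Λ i j := rfl
          rw [hsm, hΛc i j, Finset.mul_sum]
          refine Finset.sum_congr rfl fun x _ => ?_
          rw [div_eq_inv_mul]
          ring
  · rintro ⟨a, B, ha, hB, hΛ⟩
    exact isTailDep_of_BdStar Λ hdiag a B ha hB hΛ
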